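/- Assume 𝒮_A(Δ) is compact and fix an adversary strategy (Ã₁,…,Ã_M) ∈ 𝒮_A(Δ), so that under H_i the observations are i.i.d. with distribution P_iÃ_i. Then for every i ∈ [M] and every j ≠ i, as α → 0⁺, min_{A_j∈𝒜_j(Δ)} D(Q̂_{Y^{T*}}‖P_jA_j) → min_{A_j∈𝒜_j(Δ)} D(P_iÃ_i‖P_jA_j) P_i-almost surely, and likewise min_{A_j∈𝒜_j(Δ)} D(Q̂_{Y^{T*−1}}‖P_jA_j) → min_{A_j∈𝒜_j(Δ)} D(P_iÃ_i‖P_jA_j) P_i-almost surely. -/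

import Mathlib

open MeasureTheory Filter Finset Set Topology
open scoped ENNReal NNReal ENat

namespace AHT

noncomputable section

variable {X : Type*}

/-- A probability distribution on a finite alphabet. -/
def IsDist [Fintype X] (P : X → ℝ) : Prop :=
  (∀ x, 0 ≤ P x) ∧ ∑ x, P x = 1

/-- Kullback–Leibler divergence. -/
def KL [Fintype X] (P Q : X → ℝ) : ℝ :=
  ∑ a, P a * Real.log (P a / Q a)

/-- Bhattacharyya distance. -/
def Bhat [Fintype X] (Q0 Q1 : X → ℝ) : ℝ :=
  -Real.log (∑ x, (Q0 x) ^ ((1 : ℝ) / 2) * (Q1 x) ^ ((1 : ℝ) / 2))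

/-- Empirical distribution (type) of the first `n` samples. -/
def emp [Fintype X] [DecidableEq X] (n : ℕ) (ω : ℕ → X) (a : X) : ℝ :=
  (((Finset.range n).filter fun k => ω k = a).card : ℝ) / n

/-- Row-stochastic matrix (adversary channel). -/
def RowStoch [Fintype X] (A : X → X → ℝ) : Prop :=
  (∀ x y, 0 ≤ A x y) ∧ ∀ x, ∑ y, A x y = 1

/-- Output distribution of channel `A` when the input distribution is `P`. -/
def push [Fintype X] (P : X → ℝ) (A : X → X → ℝ) (y : X) : ℝ :=
  ∑ x, P x * A x y

/-- `μ` is the law of an i.i.d. sequence with one-dimensional marginal `Q`. -/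
def IsIID [Fintype X] [MeasurableSpace X] (μ : Measure (ℕ → X)) (Q : X → ℝ) : Prop :=
  IsProbabilityMeasure μ ∧
    ∀ (n : ℕ) (v : Fin n → X),
      μ {ω | ∀ k : Fin n, ω (k : ℕ) = v k} = ENNReal.ofReal (∏ k, Q (v k))

/-- Admissible adversary channels for hypothesis distribution `Pi`. -/
def Adm [Fintype X] (d : (X → ℝ) → (X → ℝ) → ℝ) (Δ : ℝ) (Pi : X → ℝ) :
    Set (X → X → ℝ) :=
  {A | RowStoch A ∧ d Pi (push Pi A) ≤ Δ ∧ ∀ y, 0 < push Pi A y}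

/-- The constant `C = Σ_{n ≥ 1} e^{-n^{1-ζ}}` with `ζ = 0.85`. -/
def Cζ : ℝ := ∑' n : ℕ, Real.exp (-((n : ℝ) + 1) ^ (0.15 : ℝ))

/-- The thresholds `γ_n` (with `K = |𝒳|`). -/
def gammaTh (K M : ℕ) (α : ℝ) (n : ℕ) : ℝ :=
  Real.log (Cζ / α) / n + 1 / (n : ℝ) ^ (0.85 : ℝ) +
    ((K : ℝ) * Real.log ((n : ℝ) + 1) + Real.log ((M : ℝ) - 1)) / n

/-- The statistic `Z_i^{(n)}`. -/
def Zstat [Fintype X] [DecidableEq X] {M : ℕ} (P : Fin M → X → ℝ)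
    (d : (X → ℝ) → (X → ℝ) → ℝ) (Δ : ℝ) (i : Fin M) (n : ℕ) (ω : ℕ → X) : ℝ :=
  sInf {r | ∃ j, j ≠ i ∧ ∃ A ∈ Adm d Δ (P j), r = KL (emp n ω) (push (P j) A)}

/-- The one-sided stopping times `T_i`. -/
def Ti [Fintype X] [DecidableEq X] {M : ℕ} (P : Fin M → X → ℝ)
    (d : (X → ℝ) → (X → ℝ) → ℝ) (Δ α : ℝ) (i : Fin M) (ω : ℕ → X) : ℕ∞ :=
  sInf {t : ℕ∞ | ∃ n : ℕ, t = (n : ℕ∞) ∧ 1 ≤ n ∧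
    gammaTh (Fintype.card X) M α n ≤ Zstat P d Δ i n ω}

/-- The stopping time `T*`. -/
def Tstar [Fintype X] [DecidableEq X] {M : ℕ} (P : Fin M → X → ℝ)
    (d : (X → ℝ) → (X → ℝ) → ℝ) (Δ α : ℝ) (ω : ℕ → X) : ℕ∞ :=
  ⨅ i, Ti P d Δ α i ω

/-- Expected value of an `ℕ∞`-valued stopping time. -/
def ExpT [MeasurableSpace X] (μ : Measure (ℕ → X)) (T : (ℕ → X) → ℕ∞) : ℝ :=
  (∫⁻ ω, ((T ω : ℕ∞) : ℝ≥0∞) ∂μ).toReal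

/-- Thresholds in the binary non-aware setting. -/
def gammaNA (K : ℕ) (α : ℝ) (n : ℕ) : ℝ :=
  Real.log (Cζ / α) / n + 1 / (n : ℝ) ^ (0.85 : ℝ) + (K : ℝ) * Real.log ((n : ℝ) + 1) / n

/-- Admissible common channels in the non-aware setting. -/
def AdmNA [Fintype X] (d : (X → ℝ) → (X → ℝ) → ℝ) (Δ : ℝ) (P0 P1 : X → ℝ) :
    Set (X → X → ℝ) :=
  {A | RowStoch A ∧ max (d P0 (push P0 A)) (d P1 (push P1 A)) ≤ Δ ∧
    (∀ y, 0 < push P0 A y) ∧ ∀ y, 0 < push P1 A y}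

/-- The statistic `S_n` in the non-aware setting. -/
def Sstat [Fintype X] [DecidableEq X] (P0 P1 : X → ℝ)
    (d : (X → ℝ) → (X → ℝ) → ℝ) (Δ : ℝ) (n : ℕ) (ω : ℕ → X) : ℝ :=
  sInf {r | ∃ A ∈ AdmNA d Δ P0 P1,
    r = max (KL (emp n ω) (push P0 A)) (KL (emp n ω) (push P1 A))}

/-- Stopping time `τ*` of the non-aware test. -/
def tauNA [Fintype X] [DecidableEq X] (P0 P1 : X → ℝ)
    (d : (X → ℝ) → (X → ℝ) → ℝ) (Δ α : ℝ) (ω : ℕ → X) : ℕ∞ :=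
  sInf {t : ℕ∞ | ∃ n : ℕ, t = (n : ℕ∞) ∧ 1 ≤ n ∧
    gammaNA (Fintype.card X) α n ≤ Sstat P0 P1 d Δ n ω}

/-- A sequential test: a stopping time together with an `F_T`-measurable decision,
expressed functionally (the stopping decision and the final decision depend only on
the samples observed up to the stopping time). -/
structure SeqTest (X : Type*) (M : ℕ) where
  T : (ℕ → X) → ℕ∞
  dec : (ℕ → X) → Fin M
  adapted : ∀ ω ω' : ℕ → X, ∀ n : ℕ, T ω = (n : ℕ∞) →
    (∀ k < n, ω k = ω' k) → T ω' = (n : ℕ∞) ∧ dec ω' = dec ω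

/-- Membership in the decision maker's strategy set `𝒮_D(α)`: all error
probabilities are at most `α` whatever admissible strategy the adversary uses,
and the expected stopping times are finite. -/
def InSD [Fintype X] [MeasurableSpace X] {M : ℕ} (P : Fin M → X → ℝ)
    (d : (X → ℝ) → (X → ℝ) → ℝ) (Δ α : ℝ) (Φ : SeqTest X M) : Prop :=
  ∀ B : Fin M → X → X → ℝ, (∀ i, B i ∈ Adm d Δ (P i)) →
    ∀ ν : Fin M → Measure (ℕ → X), (∀ i, IsIID (ν i) (push (P i) (B i))) →
      ∀ i, ν i {ω | Φ.dec ω ≠ i} ≤ ENNReal.ofReal α ∧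
        ∫⁻ ω, ((Φ.T ω : ℕ∞) : ℝ≥0∞) ∂(ν i) < ⊤


/-! ### Auxiliary lemmas -/

lemma aux_mul_log_ge {x : ℝ} (hx : 0 ≤ x) : x - 1 ≤ x * Real.log x := by
  rcases eq_or_lt_of_le hx with h | h
  · simp [← h]
  · have h1 : Real.log x⁻¹ ≤ x⁻¹ - 1 := Real.log_le_sub_one_of_pos (by positivity)
    rw [Real.log_inv] at h1
    have h2 : x * (1 - x⁻¹) ≤ x * Real.log x := by nlinarith
    have h3 : x * (1 - x⁻¹) = x - 1 := by field_simp
    linarith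

lemma aux_mul_log_nonpos {x : ℝ} (h0 : 0 ≤ x) (h1 : x ≤ 1) : x * Real.log x ≤ 0 := by
  rcases eq_or_lt_of_le h0 with h | h
  · simp [← h]
  · exact mul_nonpos_of_nonneg_of_nonpos h0 (Real.log_nonpos h0 h1)

section KLLemmas
variable [Fintype X]

lemma KL_eq' {Q R : X → ℝ} (hQ : ∀ a, 0 ≤ Q a) (hR : ∀ a, 0 < R a) :
    KL Q R = ∑ a, (Q a * Real.log (Q a) - Q a * Real.log (R a)) := by
  unfold KL
  refine Finset.sum_congr rfl fun a _ => ?_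
  rcases eq_or_lt_of_le (hQ a) with h | h
  · simp [← h]
  · rw [Real.log_div (ne_of_gt h) (ne_of_gt (hR a))]; ring

lemma KL_ge' {Q R : X → ℝ} (hQ : ∀ a, 0 ≤ Q a) (hR : ∀ a, 0 < R a)
    (hR1 : ∀ a, R a ≤ 1) : -(Fintype.card X : ℝ) ≤ KL Q R := by
  rw [KL_eq' hQ hR]
  have : ∀ a : X, (-1 : ℝ) ≤ Q a * Real.log (Q a) - Q a * Real.log (R a) := by
    intro a
    have h1 : Q a - 1 ≤ Q a * Real.log (Q a) := aux_mul_log_ge (hQ a)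
    have h2 : Q a * Real.log (R a) ≤ 0 :=
      mul_nonpos_of_nonneg_of_nonpos (hQ a) (Real.log_nonpos (hR a).le (hR1 a))
    nlinarith [hQ a]
  calc -(Fintype.card X : ℝ) = ∑ _a : X, (-1 : ℝ) := by simp
    _ ≤ _ := Finset.sum_le_sum fun a _ => this a

lemma KL_le' {Q R : X → ℝ} {Lm : ℝ} (hQ : ∀ a, 0 ≤ Q a) (hQ1 : ∀ a, Q a ≤ 1)
    (hQs : ∑ a, Q a ≤ 1) (hR : ∀ a, 0 < R a) (hR1 : ∀ a, R a ≤ 1)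
    (hlog : ∀ a, -Real.log (R a) ≤ Lm) (hLm : 0 ≤ Lm) : KL Q R ≤ Lm := by
  rw [KL_eq' hQ hR]
  have h1 : ∀ a : X, Q a * Real.log (Q a) - Q a * Real.log (R a) ≤ Q a * Lm := by
    intro a
    have := aux_mul_log_nonpos (hQ a) (hQ1 a)
    have h2 : -(Q a * Real.log (R a)) ≤ Q a * Lm := by
      rw [← mul_neg]
      exact mul_le_mul_of_nonneg_left (hlog a) (hQ a)
    linarith
  calc (∑ a, (Q a * Real.log (Q a) - Q a * Real.log (R a)))
      ≤ ∑ a, Q a * Lm := Finset.sum_le_sum fun a _ => h1 a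
    _ = (∑ a, Q a) * Lm := by rw [Finset.sum_mul]
    _ ≤ 1 * Lm := mul_le_mul_of_nonneg_right hQs hLm
    _ = Lm := one_mul Lm

lemma KL_diff_le' {Q Q' R : X → ℝ} {Lm : ℝ} (hQ : ∀ a, 0 ≤ Q a) (hQ' : ∀ a, 0 ≤ Q' a)
    (hR : ∀ a, 0 < R a) (hlog : ∀ a, |Real.log (R a)| ≤ Lm) :
    |KL Q R - KL Q' R| ≤
      (∑ a, |Q a * Real.log (Q a) - Q' a * Real.log (Q' a)|) + Lm * ∑ a, |Q a - Q' a| := by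
  rw [KL_eq' hQ hR, KL_eq' hQ' hR, ← Finset.sum_sub_distrib]
  have h1 : ∀ a : X, (Q a * Real.log (Q a) - Q a * Real.log (R a)) -
      (Q' a * Real.log (Q' a) - Q' a * Real.log (R a)) =
      (Q a * Real.log (Q a) - Q' a * Real.log (Q' a)) - (Q a - Q' a) * Real.log (R a) := by
    intro a; ring
  simp only [h1]
  calc |∑ a, ((Q a * Real.log (Q a) - Q' a * Real.log (Q' a)) - (Q a - Q' a) * Real.log (R a))|
      ≤ ∑ a, |(Q a * Real.log (Q a) - Q' a * Real.log (Q' a)) - (Q a - Q' a) * Real.log (R a)| :=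
        Finset.abs_sum_le_sum_abs _ _
    _ ≤ ∑ a, (|Q a * Real.log (Q a) - Q' a * Real.log (Q' a)| + |Q a - Q' a| * Lm) := by
        refine Finset.sum_le_sum fun a _ => ?_
        refine (abs_sub _ _).trans ?_
        gcongr
        rw [abs_mul]
        exact mul_le_mul_of_nonneg_left (hlog a) (abs_nonneg _)
    _ = (∑ a, |Q a * Real.log (Q a) - Q' a * Real.log (Q' a)|) + Lm * ∑ a, |Q a - Q' a| := by
        rw [Finset.sum_add_distrib, Finset.mul_sum]
        congr 1
        exact Finset.sum_congr rfl fun a _ => mul_comm _ _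

end KLLemmas

lemma aux_abs_sInf_sub_sInf_le {β : Type*} {S : Set β} (hS : S.Nonempty) {f g : β → ℝ}
    (hf : BddBelow (f '' S)) (hg : BddBelow (g '' S)) {e : ℝ}
    (he : ∀ A ∈ S, |f A - g A| ≤ e) :
    |sInf (f '' S) - sInf (g '' S)| ≤ e := by
  have H : ∀ u v : β → ℝ, BddBelow (v '' S) → (∀ A ∈ S, v A ≤ u A + e) →
      sInf (v '' S) ≤ sInf (u '' S) + e := by
    intro u v hv h
    have h2 : ∀ b ∈ u '' S, sInf (v '' S) - e ≤ b := by
      rintro b ⟨A, hA, rfl⟩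
      have h3 : sInf (v '' S) ≤ v A := csInf_le hv ⟨A, hA, rfl⟩
      linarith [h A hA]
    have h4 := le_csInf (hS.image u) h2
    linarith
  rw [abs_sub_le_iff]
  constructor
  · have := H g f hf fun A hA => by
      have h := he A hA; rw [abs_sub_le_iff] at h; linarith [h.1]
    linarith
  · have := H f g hg fun A hA => by
      have h := he A hA; rw [abs_sub_le_iff] at h; linarith [h.2]
    linarith
section PushLemmas
variable [Fintype X]

lemma push_nonneg' {P : X → ℝ} {A : X → X → ℝ} (hP : IsDist P) (hA : RowStoch A) (y : X) :
    0 ≤ push P A y :=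
  Finset.sum_nonneg fun x _ => mul_nonneg (hP.1 x) (hA.1 x y)

lemma push_le_one' {P : X → ℝ} {A : X → X → ℝ} (hP : IsDist P) (hA : RowStoch A) (y : X) :
    push P A y ≤ 1 := by
  have h1 : ∀ x : X, A x y ≤ 1 := by
    intro x
    calc A x y ≤ ∑ y', A x y' :=
          Finset.single_le_sum (fun y' _ => hA.1 x y') (Finset.mem_univ y)
      _ = 1 := hA.2 x
  calc push P A y = ∑ x, P x * A x y := rfl
    _ ≤ ∑ x, P x * 1 := Finset.sum_le_sum fun x _ =>
        mul_le_mul_of_nonneg_left (h1 x) (hP.1 x)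
    _ = 1 := by simpa using hP.2

lemma push_sum_one' {P : X → ℝ} {A : X → X → ℝ} (hP : IsDist P) (hA : RowStoch A) :
    ∑ y, push P A y = 1 := by
  unfold push
  rw [Finset.sum_comm]
  calc ∑ x, ∑ y, P x * A x y = ∑ x, P x * ∑ y, A x y := by
        simp [Finset.mul_sum]
    _ = ∑ x, P x := by
        refine Finset.sum_congr rfl fun x _ => by rw [hA.2 x, mul_one]
    _ = 1 := hP.2

end PushLemmas
lemma aux_nullMeasurable_of_compl {Ω : Type*} [MeasurableSpace Ω] {μ : Measure Ω}
    [IsProbabilityMeasure μ] {s : Set Ω} (h : μ s + μ sᶜ ≤ 1) : NullMeasurableSet s μ := by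
  set B := toMeasurable μ s with hB
  set B' := toMeasurable μ sᶜ with hB'
  have hBs : s ⊆ B := subset_toMeasurable μ s
  have hB's : sᶜ ⊆ B' := subset_toMeasurable μ sᶜ
  have hU : B ∪ B' = Set.univ := by
    rw [Set.eq_univ_iff_forall]
    intro x
    by_cases hx : x ∈ s
    · exact Or.inl (hBs hx)
    · exact Or.inr (hB's hx)
  have hkey : μ (B ∩ B') = 0 := by
    have h1 : μ (B ∪ B') + μ (B ∩ B') = μ B + μ B' :=
      measure_union_add_inter₀ B (measurableSet_toMeasurable μ _).nullMeasurableSet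
    rw [hU, measure_univ, measure_toMeasurable, measure_toMeasurable] at h1
    have h2 : (1 : ℝ≥0∞) + μ (B ∩ B') ≤ 1 + 0 := by rw [add_zero, h1]; exact h
    exact le_antisymm ((ENNReal.add_le_add_iff_left ENNReal.one_ne_top).1 h2) zero_le
  have hdiff : μ (B \ s) = 0 := by
    refine measure_mono_null ?_ hkey
    intro x hx
    exact ⟨hx.1, hB's hx.2⟩
  exact ⟨B, measurableSet_toMeasurable μ s, ae_eq_set.2 ⟨by simp [Set.diff_eq_empty.2 hBs], hdiff⟩⟩

section IIDLemmas
variable [Fintype X] [DecidableEq X] [MeasurableSpace X] {μ : Measure (ℕ → X)} {Q : X → ℝ}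

lemma aux_cyl_null (hiid : IsIID μ Q) (hQ0 : ∀ a, 0 ≤ Q a) (hQs : ∑ a, Q a = 1)
    (n : ℕ) (v : Fin n → X) :
    NullMeasurableSet {ω : ℕ → X | ∀ k : Fin n, ω (k : ℕ) = v k} μ := by
  haveI : IsProbabilityMeasure μ := hiid.1
  set C : (Fin n → X) → Set (ℕ → X) := fun w => {ω | ∀ k : Fin n, ω (k : ℕ) = w k} with hC
  have hsum : ∑ w : Fin n → X, μ (C w) = 1 := by
    rw [Finset.sum_congr rfl fun w _ => hiid.2 n w,
      ← ENNReal.ofReal_sum_of_nonneg fun w _ => Finset.prod_nonneg fun k _ => hQ0 _]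
    have h2 : ∑ w : Fin n → X, ∏ k, Q (w k) = ∏ _k : Fin n, ∑ x : X, Q x := by
      rw [Finset.prod_univ_sum, Fintype.piFinset_univ]
    rw [h2, hQs]
    simp
  have hsub : (C v)ᶜ ⊆ ⋃ w ∈ Finset.univ.erase v, C w := by
    intro ω hω
    have hωmem : ω ∈ C fun k => ω (k : ℕ) := fun k => rfl
    have hne : (fun k : Fin n => ω (k : ℕ)) ≠ v := by
      intro he
      exact hω (by rw [← he]; exact hωmem)
    exact Set.mem_biUnion (Finset.mem_erase.2 ⟨hne, Finset.mem_univ _⟩) hωmem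
  have hcompl : μ (C v)ᶜ ≤ ∑ w ∈ Finset.univ.erase v, μ (C w) :=
    (measure_mono hsub).trans (measure_biUnion_finset_le _ _)
  refine aux_nullMeasurable_of_compl ?_
  calc μ (C v) + μ (C v)ᶜ ≤ μ (C v) + ∑ w ∈ Finset.univ.erase v, μ (C w) :=
        add_le_add_right hcompl _
    _ = ∑ w, μ (C w) := by
        rw [add_comm, Finset.sum_erase_add _ _ (Finset.mem_univ v)]
    _ = 1 := hsum

lemma aux_box (hiid : IsIID μ Q) (hQ0 : ∀ a, 0 ≤ Q a) (hQs : ∑ a, Q a = 1)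
    (n : ℕ) (s : Fin n → Finset X) :
    μ {ω : ℕ → X | ∀ k : Fin n, ω (k : ℕ) ∈ s k} =
      ENNReal.ofReal (∏ k, ∑ x ∈ s k, Q x) ∧
    NullMeasurableSet {ω : ℕ → X | ∀ k : Fin n, ω (k : ℕ) ∈ s k} μ := by
  have hset : {ω : ℕ → X | ∀ k : Fin n, ω (k : ℕ) ∈ s k} =
      ⋃ v ∈ Fintype.piFinset s, {ω : ℕ → X | ∀ k : Fin n, ω (k : ℕ) = v k} := by
    ext ω
    simp only [Set.mem_setOf_eq, Set.mem_iUnion, Fintype.mem_piFinset, exists_prop]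
    constructor
    · intro h; exact ⟨fun k => ω (k : ℕ), fun k => h k, fun k => rfl⟩
    · rintro ⟨v, hv, he⟩ k; rw [he k]; exact hv k
  have hdisj : (↑(Fintype.piFinset s) : Set (Fin n → X)).Pairwise
      (Function.onFun (MeasureTheory.AEDisjoint μ) fun v => {ω : ℕ → X | ∀ k : Fin n, ω (k : ℕ) = v k}) := by
    intro v _ w _ hvw
    refine Disjoint.aedisjoint (Set.disjoint_left.2 ?_)
    intro ω h1 h2
    exact hvw (funext fun k => (h1 k).symm.trans (h2 k))
  rw [hset]
  constructor
  · rw [measure_biUnion_finset₀ hdisj fun v _ => aux_cyl_null hiid hQ0 hQs n v,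
      Finset.sum_congr rfl fun v _ => hiid.2 n v,
      ← ENNReal.ofReal_sum_of_nonneg fun v _ => Finset.prod_nonneg fun k _ => hQ0 _]
    congr 1
    rw [Finset.prod_univ_sum]
  · exact NullMeasurableSet.biUnion (Finset.countable_toSet _)
      fun v _ => aux_cyl_null hiid hQ0 hQs n v

lemma aux_single (hiid : IsIID μ Q) (hQ0 : ∀ a, 0 ≤ Q a) (hQs : ∑ a, Q a = 1)
    (k : ℕ) (s : Finset X) :
    μ {ω : ℕ → X | ω k ∈ s} = ENNReal.ofReal (∑ x ∈ s, Q x) ∧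
    NullMeasurableSet {ω : ℕ → X | ω k ∈ s} μ := by
  have h := aux_box hiid hQ0 hQs (k + 1) fun m => if (m : ℕ) = k then s else Finset.univ
  have hset : {ω : ℕ → X | ∀ m : Fin (k + 1), ω (m : ℕ) ∈
      (if (m : ℕ) = k then s else Finset.univ)} = {ω : ℕ → X | ω k ∈ s} := by
    ext ω
    simp only [Set.mem_setOf_eq]
    constructor
    · intro h2
      have h3 := h2 ⟨k, Nat.lt_succ_self k⟩
      simpa using h3
    · intro h2 m
      by_cases hm : (m : ℕ) = k
      · rw [if_pos hm, hm]; exact h2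
      · rw [if_neg hm]; exact Finset.mem_univ _
  have hprod : (∏ m : Fin (k + 1), ∑ x ∈ (if (m : ℕ) = k then s else Finset.univ), Q x) =
      ∑ x ∈ s, Q x := by
    have h4 := Fintype.prod_eq_single (f := fun m : Fin (k + 1) =>
        ∑ x ∈ (if (m : ℕ) = k then s else Finset.univ), Q x)
      (⟨k, Nat.lt_succ_self k⟩ : Fin (k + 1)) ?_
    · rw [h4]; simp
    · intro m hm
      have hne : (m : ℕ) ≠ k := fun he => hm (Fin.ext he)
      simp [hne, hQs]
  rw [hset, hprod] at h
  exact h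

lemma aux_pair (hiid : IsIID μ Q) (hQ0 : ∀ a, 0 ≤ Q a) (hQs : ∑ a, Q a = 1)
    {k l : ℕ} (hkl : k ≠ l) (s t : Finset X) :
    μ ({ω : ℕ → X | ω k ∈ s} ∩ {ω : ℕ → X | ω l ∈ t}) =
      ENNReal.ofReal ((∑ x ∈ s, Q x) * (∑ x ∈ t, Q x)) := by
  set n := max k l + 1 with hn
  have hk : k < n := lt_of_le_of_lt (le_max_left k l) (Nat.lt_succ_self _)
  have hl : l < n := lt_of_le_of_lt (le_max_right k l) (Nat.lt_succ_self _)
  set k' : Fin n := ⟨k, hk⟩ with hk'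
  set l' : Fin n := ⟨l, hl⟩ with hl'
  have hkl' : k' ≠ l' := fun h => hkl (congrArg Fin.val h)
  set sf : Fin n → Finset X :=
    fun m => if (m : ℕ) = k then s else if (m : ℕ) = l then t else Finset.univ with hsf
  have h := (aux_box hiid hQ0 hQs n sf).1
  have hset : {ω : ℕ → X | ∀ m : Fin n, ω (m : ℕ) ∈ sf m} =
      {ω : ℕ → X | ω k ∈ s} ∩ {ω : ℕ → X | ω l ∈ t} := by
    ext ω
    simp only [Set.mem_setOf_eq, Set.mem_inter_iff]
    constructor
    · intro h2
      have h3 := h2 k'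
      have h4 := h2 l'
      constructor
      · simpa [sf, k'] using h3
      · simpa [sf, hl', Ne.symm hkl] using h4
    · rintro ⟨h2, h3⟩ m
      by_cases hm1 : (m : ℕ) = k
      · simp only [sf]; rw [if_pos hm1, hm1]; exact h2
      · by_cases hm2 : (m : ℕ) = l
        · simp only [sf]; rw [if_neg hm1, if_pos hm2, hm2]; exact h3
        · simp only [sf]; rw [if_neg hm1, if_neg hm2]; exact Finset.mem_univ _
  have hprod : (∏ m : Fin n, ∑ x ∈ sf m, Q x) = (∑ x ∈ s, Q x) * (∑ x ∈ t, Q x) := by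
    have hsub : ∏ m ∈ ({k', l'} : Finset (Fin n)), (∑ x ∈ sf m, Q x) =
        ∏ m : Fin n, ∑ x ∈ sf m, Q x := by
      refine Finset.prod_subset (Finset.subset_univ _) ?_
      intro m _ hm
      simp only [Finset.mem_insert, Finset.mem_singleton, not_or] at hm
      have h1 : (m : ℕ) ≠ k := fun he => hm.1 (Fin.ext he)
      have h2 : (m : ℕ) ≠ l := fun he => hm.2 (Fin.ext he)
      simp only [sf]; rw [if_neg h1, if_neg h2]; exact hQs
    rw [← hsub, Finset.prod_pair hkl']
    have e1 : (∑ x ∈ sf k', Q x) = ∑ x ∈ s, Q x := by simp [sf, hk']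
    have e2 : (∑ x ∈ sf l', Q x) = ∑ x ∈ t, Q x := by
      simp [sf, hl', Ne.symm hkl]
    rw [e1, e2]
  rw [hset, hprod] at h
  exact h

end IIDLemmas
section SLLN
variable [Fintype X] [DecidableEq X] [MeasurableSpace X] {μ : Measure (ℕ → X)} {Q : X → ℝ}

lemma aux_emp_tendsto (hiid : IsIID μ Q) (hQ0 : ∀ a, 0 ≤ Q a) (hQs : ∑ a, Q a = 1) :
    ∀ᵐ ω ∂μ, ∀ a : X, Tendsto (fun n => emp n ω a) atTop (𝓝 (Q a)) := by
  haveI : IsProbabilityMeasure μ := hiid.1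
  rw [MeasureTheory.ae_all_iff]
  intro a
  classical
  set f : ℕ → (ℕ → X) → ℝ := fun k ω => if ω k = a then 1 else 0 with hf
  have hpre : ∀ (k : ℕ) (s : Set ℝ), f k ⁻¹' s =
      {ω : ℕ → X | ω k ∈ Finset.univ.filter fun x => (if x = a then (1 : ℝ) else 0) ∈ s} := by
    intro k s
    ext ω
    simp [f]
  have hsingle := fun (k : ℕ) (s : Finset X) => aux_single hiid hQ0 hQs k s
  have hEnull : ∀ k : ℕ, NullMeasurableSet {ω : ℕ → X | ω k ∈ ({a} : Finset X)} μ :=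
    fun k => (hsingle k {a}).2
  have hfind : ∀ k : ℕ, f k =
      Set.indicator {ω : ℕ → X | ω k ∈ ({a} : Finset X)} (fun _ => (1 : ℝ)) := by
    intro k
    funext ω
    by_cases h : ω k = a <;> simp [f, h, Set.indicator]
  have haeq : ∀ k : ℕ, f k =ᵐ[μ] Set.indicator
      (MeasureTheory.toMeasurable μ {ω : ℕ → X | ω k ∈ ({a} : Finset X)}) (fun _ => (1 : ℝ)) := by
    intro k
    rw [hfind k]
    exact _root_.indicator_ae_eq_of_ae_eq_set (hEnull k).toMeasurable_ae_eq.symm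
  have hmeasf : ∀ k, MeasureTheory.AEStronglyMeasurable (f k) μ := fun k =>
    ((measurable_const.indicator (measurableSet_toMeasurable μ _)).aestronglyMeasurable).congr
      (haeq k).symm
  have hint : MeasureTheory.Integrable (f 0) μ :=
    ((MeasureTheory.integrable_const (1 : ℝ)).indicator
      (measurableSet_toMeasurable μ _)).congr (haeq 0).symm
  have hident : ∀ k, ProbabilityTheory.IdentDistrib (f k) (f 0) μ μ := by
    intro k
    refine ⟨(hmeasf k).aemeasurable, (hmeasf 0).aemeasurable, ?_⟩
    ext s hs
    rw [Measure.map_apply_of_aemeasurable (hmeasf k).aemeasurable hs,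
      Measure.map_apply_of_aemeasurable (hmeasf 0).aemeasurable hs,
      hpre, hpre, (hsingle k _).1, (hsingle 0 _).1]
  have hindep : Pairwise (Function.onFun (ProbabilityTheory.IndepFun · · μ) f) := by
    intro k l hkl
    show ProbabilityTheory.IndepFun (f k) (f l) μ
    rw [ProbabilityTheory.indepFun_iff_measure_inter_preimage_eq_mul]
    intro s t _ _
    rw [hpre, hpre, aux_pair hiid hQ0 hQs hkl _ _, (hsingle k _).1, (hsingle l _).1,
      ENNReal.ofReal_mul (Finset.sum_nonneg fun x _ => hQ0 x)]
  have hSLLN := ProbabilityTheory.strong_law_ae_real f hint hindep hident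
  have hexp : (∫ ω, f 0 ω ∂μ) = Q a := by
    rw [MeasureTheory.integral_congr_ae (haeq 0),
      MeasureTheory.integral_indicator_const (1 : ℝ) (measurableSet_toMeasurable μ _),
      MeasureTheory.measureReal_def, MeasureTheory.measure_toMeasurable, (hsingle 0 {a}).1]
    simp [ENNReal.toReal_ofReal (hQ0 a)]
  rw [hexp] at hSLLN
  filter_upwards [hSLLN] with ω hω
  have heq : (fun n : ℕ => (∑ k ∈ Finset.range n, f k ω) / n) = fun n => emp n ω a := by
    funext n
    simp only [emp, f]
    rw [Finset.sum_boole]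
  rwa [heq] at hω

end SLLN
lemma aux_Cz_summable : Summable fun n : ℕ => Real.exp (-((n : ℝ) + 1) ^ (0.15 : ℝ)) := by
  have hlo := (_root_.isLittleO_log_rpow_atTop (by norm_num : (0:ℝ) < 0.15)).def
    (by norm_num : (0:ℝ) < 1/2)
  rw [eventually_atTop] at hlo
  obtain ⟨x₀, hx₀⟩ := hlo
  set N : ℕ := ⌈max x₀ 1⌉₊ with hN
  have hg : Summable fun n : ℕ => (((n : ℝ) + 1) ^ 2)⁻¹ := by
    have h1 : Summable fun n : ℕ => ((n : ℝ) ^ 2)⁻¹ := Real.summable_nat_pow_inv.2 (by norm_num)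
    have h2 := (summable_nat_add_iff 1).2 h1
    refine h2.congr fun n => ?_
    push_cast
    ring_nf
  refine summable_of_isBigO_nat hg ?_
  rw [Asymptotics.isBigO_iff]
  refine ⟨1, eventually_atTop.2 ⟨N, fun n hn => ?_⟩⟩
  set x : ℝ := (n : ℝ) + 1 with hx
  have hn0 : (0 : ℝ) ≤ (n : ℝ) := Nat.cast_nonneg n
  have hx1 : (1 : ℝ) ≤ x := by simp only [hx]; linarith
  have hxpos : (0 : ℝ) < x := by linarith
  have hx0' : x₀ ≤ x := by
    have h1 : max x₀ 1 ≤ (N : ℝ) := Nat.le_ceil _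
    have h2 : (N : ℝ) ≤ (n : ℝ) := Nat.cast_le.2 hn
    have h3 : x₀ ≤ max x₀ 1 := le_max_left _ _
    simp only [hx]; linarith
  have key := hx₀ x hx0'
  rw [Real.norm_eq_abs, Real.norm_eq_abs, abs_of_nonneg (Real.log_nonneg hx1),
    abs_of_nonneg (Real.rpow_nonneg hxpos.le _)] at key
  have h2log : 2 * Real.log x ≤ x ^ (0.15 : ℝ) := by linarith
  have e1 : Real.exp (-(2 * Real.log x)) = (x ^ 2)⁻¹ := by
    rw [Real.exp_neg]
    congr 1
    rw [two_mul, Real.exp_add, Real.exp_log hxpos]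
    ring
  have e2 : Real.exp (-x ^ (0.15 : ℝ)) ≤ (x ^ 2)⁻¹ := by
    rw [← e1]
    exact Real.exp_le_exp.2 (by linarith)
  rw [Real.norm_eq_abs, Real.norm_eq_abs, abs_of_nonneg (Real.exp_pos _).le,
    abs_of_nonneg (by positivity : (0:ℝ) ≤ (x ^ 2)⁻¹), one_mul]
  exact e2

lemma aux_Cz_pos : 0 < Cζ :=
  Summable.tsum_pos aux_Cz_summable (fun n => (Real.exp_pos _).le) 0 (Real.exp_pos _)

lemma aux_log_div_tendsto {c : ℝ} (hc : 0 < c) :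
    Tendsto (fun α : ℝ => Real.log (c / α)) (𝓝[>] 0) atTop := by
  have h1 : Tendsto (fun α : ℝ => c / α) (𝓝[>] (0:ℝ)) atTop := by
    simpa [div_eq_mul_inv] using tendsto_inv_nhdsGT_zero.const_mul_atTop hc
  exact Real.tendsto_log_atTop.comp h1

lemma aux_gamma_tendsto (K M : ℕ) (α : ℝ) :
    Tendsto (fun n : ℕ => gammaTh K M α n) atTop (𝓝 0) := by
  have h1 : Tendsto (fun n : ℕ => Real.log (Cζ / α) / n) atTop (𝓝 0) :=
    tendsto_const_div_atTop_nhds_zero_nat _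
  have h2 : Tendsto (fun n : ℕ => 1 / (n : ℝ) ^ (0.85 : ℝ)) atTop (𝓝 0) := by
    simp only [one_div]
    exact ((tendsto_rpow_atTop (by norm_num)).comp tendsto_natCast_atTop_atTop).inv_tendsto_atTop
  have h3 : Tendsto (fun n : ℕ => Real.log ((n : ℝ) + 1) / n) atTop (𝓝 0) := by
    have h5 := (Real.tendsto_pow_log_div_mul_add_atTop 1 (-1) 1 one_ne_zero).comp
      (tendsto_atTop_add_const_right atTop (1:ℝ) tendsto_natCast_atTop_atTop)
    refine h5.congr fun n => ?_
    show Real.log ((n:ℝ)+1) ^ 1 / (1 * ((n:ℝ)+1) + -1) = _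
    rw [pow_one]
    congr 1
    ring
  have h4 : Tendsto (fun n : ℕ => ((K : ℝ) * Real.log ((n : ℝ) + 1) + Real.log ((M : ℝ) - 1)) / n)
      atTop (𝓝 0) := by
    have h6 := (h3.const_mul (K : ℝ)).add
      (tendsto_const_div_atTop_nhds_zero_nat (Real.log ((M : ℝ) - 1)))
    rw [mul_zero, add_zero] at h6
    refine h6.congr fun n => ?_
    ring
  have h7 := (h1.add h2).add h4
  rw [add_zero, add_zero] at h7
  exact h7
/-- almost sure convergence of the minimized empirical KL divergences
evaluated at the stopping time T* (and at T* − 1) as α → 0⁺. -/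
theorem empirical_kl_at_Tstar_as_convergence {X : Type*} [Fintype X] [DecidableEq X]
    [MeasurableSpace X]
    {M : ℕ} (hM : 2 ≤ M) (P : Fin M → X → ℝ) (hP : ∀ i, IsDist (P i))
    (hPd : ∀ i j, i ≠ j → P i ≠ P j)
    (d : (X → ℝ) → (X → ℝ) → ℝ) (Δ : ℝ) (hΔ : 0 < Δ)
    (hcompact : IsCompact {A : Fin M → X → X → ℝ | ∀ i, A i ∈ Adm d Δ (P i)})
    (ε : ℝ) (hε : 0 < ε)
    (hsep : ∀ i j, i ≠ j → ∀ Ai ∈ Adm d Δ (P i), ∀ Aj ∈ Adm d Δ (P j),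
      ε ≤ KL (push (P i) Ai) (push (P j) Aj))
    (Atil : Fin M → X → X → ℝ) (hAtil : ∀ i, Atil i ∈ Adm d Δ (P i))
    (μ : Fin M → Measure (ℕ → X)) (hμ : ∀ i, IsIID (μ i) (push (P i) (Atil i)))
    (i j : Fin M) (hij : j ≠ i) :
    (∀ᵐ ω ∂(μ i),
      Tendsto (fun α : ℝ => sInf {r : ℝ | ∃ A ∈ Adm d Δ (P j),
          r = KL (emp (Tstar P d Δ α ω).toNat ω) (push (P j) A)})
        (𝓝[>] (0 : ℝ))
        (𝓝 (sInf {r : ℝ | ∃ A ∈ Adm d Δ (P j),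
          r = KL (push (P i) (Atil i)) (push (P j) A)}))) ∧
    (∀ᵐ ω ∂(μ i),
      Tendsto (fun α : ℝ => sInf {r : ℝ | ∃ A ∈ Adm d Δ (P j),
          r = KL (emp ((Tstar P d Δ α ω).toNat - 1) ω) (push (P j) A)})
        (𝓝[>] (0 : ℝ))
        (𝓝 (sInf {r : ℝ | ∃ A ∈ Adm d Δ (P j),
          r = KL (push (P i) (Atil i)) (push (P j) A)}))) := by
  classical
  rcases isEmpty_or_nonempty X with hX | hX
  · exfalso
    have h1 := (hP i).2
    rw [Finset.univ_eq_empty, Finset.sum_empty] at h1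
    exact one_ne_zero h1.symm
  set Qstar : X → ℝ := push (P i) (Atil i) with hQstar
  have hQstar0 : ∀ a, 0 ≤ Qstar a := push_nonneg' (hP i) (hAtil i).1
  have hQstars : ∑ a, Qstar a = 1 := push_sum_one' (hP i) (hAtil i).1
  -- compactness of each admissible set
  have hAdm_cpt : ∀ j' : Fin M, IsCompact (Adm d Δ (P j')) := by
    intro j'
    have himg : Adm d Δ (P j') =
        (fun A : Fin M → X → X → ℝ => A j') '' {A | ∀ i', A i' ∈ Adm d Δ (P i')} := by
      ext B
      constructor
      · intro hB
        refine ⟨Function.update Atil j' B, fun i' => ?_, Function.update_self _ _ _⟩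
        rcases eq_or_ne i' j' with h | h
        · subst h; rw [Function.update_self]; exact hB
        · rw [Function.update_of_ne h]; exact hAtil i'
      · rintro ⟨A, hA, rfl⟩; exact hA j'
    rw [himg]
    exact hcompact.image (continuous_apply j')
  -- uniform positive lower bound on pushed distributions
  have hδ : ∀ j' : Fin M, ∃ δ : ℝ, 0 < δ ∧ ∀ A ∈ Adm d Δ (P j'), ∀ y, δ ≤ push (P j') A y := by
    intro j'
    have hy : ∀ y : X, ∃ δ : ℝ, 0 < δ ∧ ∀ A ∈ Adm d Δ (P j'), δ ≤ push (P j') A y := by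
      intro y
      have hcont : ContinuousOn (fun A : X → X → ℝ => push (P j') A y) (Adm d Δ (P j')) := by
        refine Continuous.continuousOn ?_
        unfold push
        exact continuous_finset_sum _ fun x _ =>
          continuous_const.mul ((continuous_apply y).comp (continuous_apply x))
      obtain ⟨A₀, hA₀, hmin⟩ := (hAdm_cpt j').exists_isMinOn ⟨Atil j', hAtil j'⟩ hcont
      exact ⟨push (P j') A₀ y, hA₀.2.2 y, fun A hA => hmin hA⟩
    choose g hg1 hg2 using hy
    refine ⟨Finset.univ.inf' Finset.univ_nonempty g, ?_, ?_⟩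
    · rw [Finset.lt_inf'_iff]; exact fun y _ => hg1 y
    · intro A hA y
      exact le_trans (Finset.inf'_le g (Finset.mem_univ y)) (hg2 y A hA)
  choose δf hδpos hδle using hδ
  haveI : Nonempty (Fin M) := ⟨i⟩
  set Lmax : ℝ := max 1 (Finset.univ.sup' Finset.univ_nonempty fun j' => -Real.log (δf j'))
    with hLmaxdef
  have hLmax1 : (1 : ℝ) ≤ Lmax := le_max_left _ _
  have hLmax0 : (0 : ℝ) ≤ Lmax := by linarith
  have hlogbound : ∀ j' : Fin M, ∀ A ∈ Adm d Δ (P j'), ∀ y,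
      |Real.log (push (P j') A y)| ≤ Lmax := by
    intro j' A hA y
    have hpos := hA.2.2 y
    have hle1 := push_le_one' (hP j') hA.1 y
    rw [abs_of_nonpos (Real.log_nonpos hpos.le hle1)]
    have h1 : Real.log (δf j') ≤ Real.log (push (P j') A y) :=
      Real.log_le_log (hδpos j') (hδle j' A hA y)
    have h2 : -Real.log (δf j') ≤ Finset.univ.sup' Finset.univ_nonempty
        fun j'' => -Real.log (δf j'') :=
      Finset.le_sup' (fun j'' => -Real.log (δf j'')) (Finset.mem_univ j')
    have h3 := le_max_right (1:ℝ) (Finset.univ.sup' Finset.univ_nonempty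
        fun j'' => -Real.log (δf j''))
    rw [← hLmaxdef] at h3
    linarith
  -- SLLN
  have hae := aux_emp_tendsto (hμ i) hQstar0 hQstars
  have main : ∀ᵐ ω ∂(μ i),
      (Tendsto (fun α : ℝ => sInf {r : ℝ | ∃ A ∈ Adm d Δ (P j),
          r = KL (emp (Tstar P d Δ α ω).toNat ω) (push (P j) A)})
        (𝓝[>] (0 : ℝ))
        (𝓝 (sInf {r : ℝ | ∃ A ∈ Adm d Δ (P j),
          r = KL Qstar (push (P j) A)}))) ∧
      (Tendsto (fun α : ℝ => sInf {r : ℝ | ∃ A ∈ Adm d Δ (P j),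
          r = KL (emp ((Tstar P d Δ α ω).toNat - 1) ω) (push (P j) A)})
        (𝓝[>] (0 : ℝ))
        (𝓝 (sInf {r : ℝ | ∃ A ∈ Adm d Δ (P j),
          r = KL Qstar (push (P j) A)}))) := by
    filter_upwards [hae] with ω hω
    -- facts about the empirical measure
    have hempnn : ∀ n a, 0 ≤ emp n ω a := fun n a =>
      div_nonneg (Nat.cast_nonneg _) (Nat.cast_nonneg _)
    have hemple : ∀ n a, emp n ω a ≤ 1 := by
      intro n a
      rcases Nat.eq_zero_or_pos n with h | h
      · subst h; simp [emp]
      · rw [emp, div_le_one (by exact_mod_cast h)]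
        exact_mod_cast le_trans (Finset.card_filter_le _ _) (le_of_eq (Finset.card_range n))
    have hempsum : ∀ n, ∑ a, emp n ω a ≤ 1 := by
      intro n
      rcases Nat.eq_zero_or_pos n with h | h
      · subst h; simp [emp]
      · have hn0 : (0:ℝ) < (n:ℝ) := by exact_mod_cast h
        have hcard : ∑ a : X, (((Finset.range n).filter fun k => ω k = a).card : ℝ) = n := by
          have h2 := Finset.card_eq_sum_card_fiberwise
            (f := fun k : ℕ => ω k) (s := Finset.range n) (t := Finset.univ)
            fun x _ => Finset.mem_univ _
          rw [Finset.card_range] at h2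
          exact_mod_cast h2.symm
        have h3 : ∑ a, emp n ω a = (∑ a : X, (((Finset.range n).filter
            fun k => ω k = a).card : ℝ)) / n := by
          rw [Finset.sum_div]; rfl
        rw [h3, hcard, div_self (ne_of_gt hn0)]
    -- the error sequence
    set E : ℕ → ℝ := fun n =>
      (∑ a, |emp n ω a * Real.log (emp n ω a) - Qstar a * Real.log (Qstar a)|) +
        Lmax * ∑ a, |emp n ω a - Qstar a| with hEdef
    have hE0 : Tendsto E atTop (𝓝 0) := by
      have h1 : ∀ a : X, Tendsto (fun n => |emp n ω a * Real.log (emp n ω a) -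
          Qstar a * Real.log (Qstar a)|) atTop (𝓝 0) := by
        intro a
        have h2 := (Real.continuous_mul_log.tendsto (Qstar a)).comp (hω a)
        have h3 := (h2.sub (tendsto_const_nhds
          (x := Qstar a * Real.log (Qstar a)))).abs
        simpa [Function.comp] using h3
      have h4 : ∀ a : X, Tendsto (fun n => |emp n ω a - Qstar a|) atTop (𝓝 0) := by
        intro a
        have := ((hω a).sub (tendsto_const_nhds (x := Qstar a))).abs
        simpa [hQstar] using this
      have h5 := (tendsto_finset_sum Finset.univ fun a _ => h1 a).add
        ((tendsto_finset_sum Finset.univ fun a _ => h4 a).const_mul Lmax)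
      simpa using h5
    -- convergence of the minimized KL over the admissible set of P j
    set Fset : (X → ℝ) → Set ℝ :=
      fun Q => {r | ∃ A ∈ Adm d Δ (P j), r = KL Q (push (P j) A)} with hFsetdef
    have himg : ∀ Q : X → ℝ, Fset Q = (fun A => KL Q (push (P j) A)) '' Adm d Δ (P j) := by
      intro Q
      ext r
      simp only [hFsetdef, Set.mem_setOf_eq, Set.mem_image]
      constructor
      · rintro ⟨A, hA, rfl⟩; exact ⟨A, hA, rfl⟩
      · rintro ⟨A, hA, rfl⟩; exact ⟨A, hA, rfl⟩
    have hSne : (Adm d Δ (P j)).Nonempty := ⟨Atil j, hAtil j⟩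
    have hbdd : ∀ Q : X → ℝ, (∀ a, 0 ≤ Q a) →
        BddBelow ((fun A => KL Q (push (P j) A)) '' Adm d Δ (P j)) := by
      intro Q hQ
      refine ⟨-(Fintype.card X : ℝ), ?_⟩
      rintro r ⟨A, hA, rfl⟩
      exact KL_ge' hQ hA.2.2 (push_le_one' (hP j) hA.1)
    have hdiff : ∀ n, |sInf (Fset (emp n ω)) - sInf (Fset Qstar)| ≤ E n := by
      intro n
      rw [himg, himg]
      refine aux_abs_sInf_sub_sInf_le hSne (hbdd _ (hempnn n)) (hbdd _ hQstar0) ?_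
      intro A hA
      exact KL_diff_le' (hempnn n) hQstar0 hA.2.2 fun y => hlogbound j A hA y
    have hF : Tendsto (fun n => sInf (Fset (emp n ω))) atTop (𝓝 (sInf (Fset Qstar))) := by
      rw [tendsto_iff_dist_tendsto_zero]
      have h6 := squeeze_zero (fun n => abs_nonneg _) hdiff hE0
      simpa [Real.dist_eq] using h6
    -- lower bound for the statistic Z
    have hZbddgen : ∀ (i' : Fin M) (n : ℕ), BddBelow {r | ∃ j', j' ≠ i' ∧
        ∃ A ∈ Adm d Δ (P j'), r = KL (emp n ω) (push (P j') A)} := by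
      intro i' n
      refine ⟨-(Fintype.card X : ℝ), ?_⟩
      rintro r ⟨j', _, A, hA, rfl⟩
      exact KL_ge' (hempnn n) hA.2.2 (push_le_one' (hP j') hA.1)
    have hZub : ∀ (i' : Fin M) (n : ℕ), Zstat P d Δ i' n ω ≤ Lmax := by
      intro i' n
      obtain ⟨j'', hj''⟩ := Fintype.exists_ne_of_one_lt_card
        (by rw [Fintype.card_fin]; omega) i'
      have hmem : KL (emp n ω) (push (P j'') (Atil j'')) ∈ {r | ∃ j', j' ≠ i' ∧
          ∃ A ∈ Adm d Δ (P j'), r = KL (emp n ω) (push (P j') A)} :=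
        ⟨j'', hj'', Atil j'', hAtil j'', rfl⟩
      refine le_trans (csInf_le (hZbddgen i' n) hmem) ?_
      exact KL_le' (hempnn n) (hemple n) (hempsum n) (hAtil j'').2.2
        (push_le_one' (hP j'') (hAtil j'').1)
        (fun y => (neg_le_abs _).trans (hlogbound j'' _ (hAtil j'') y)) hLmax0
    have hZlow : ∀ᶠ n in atTop, ε / 2 ≤ Zstat P d Δ i n ω := by
      have hev : ∀ᶠ n in atTop, E n < ε / 2 := hE0.eventually_lt_const (by linarith)
      filter_upwards [hev] with n hn
      refine le_csInf ⟨_, j, hij, Atil j, hAtil j, rfl⟩ ?_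
      rintro r ⟨j', hj', A, hA, rfl⟩
      have h1 : ε ≤ KL Qstar (push (P j') A) :=
        hsep i j' (Ne.symm hj') (Atil i) (hAtil i) A hA
      have h2 := KL_diff_le' (hempnn n) hQstar0 hA.2.2 fun y => hlogbound j' A hA y
      have h3 := (abs_sub_le_iff.1 h2).2
      have h4 : (∑ a, |emp n ω a * Real.log (emp n ω a) - Qstar a * Real.log (Qstar a)|) +
          Lmax * ∑ a, |emp n ω a - Qstar a| = E n := rfl
      rw [h4] at h3
      linarith
    -- finiteness of the stopping time
    have hfin : ∀ α : ℝ, ∃ n : ℕ, 1 ≤ n ∧ Tstar P d Δ α ω ≤ (n : ℕ∞) := by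
      intro α
      have hγ0 : Tendsto (fun n : ℕ => gammaTh (Fintype.card X) M α n) atTop (𝓝 0) :=
        aux_gamma_tendsto _ _ _
      have hev := (hγ0.eventually_lt_const (by linarith : (0:ℝ) < ε / 2)).and hZlow
      obtain ⟨n, hn⟩ := (hev.and (eventually_ge_atTop 1)).exists
      refine ⟨n, hn.2, ?_⟩
      calc Tstar P d Δ α ω ≤ Ti P d Δ α i ω := iInf_le _ i
        _ ≤ (n : ℕ∞) := sInf_le ⟨n, rfl, hn.2, le_trans (le_of_lt hn.1.1) hn.1.2⟩
    -- the stopping time tends to infinity as α → 0⁺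
    have hNbound : ∀ N₀ : ℕ, ∀ᶠ α in 𝓝[>] (0:ℝ),
        ((N₀ : ℕ∞) + 1) ≤ Tstar P d Δ α ω := by
      intro N₀
      have hev1 : ∀ᶠ α in 𝓝[>] (0:ℝ), (N₀ : ℝ) * Lmax < Real.log (Cζ / α) :=
        (aux_log_div_tendsto aux_Cz_pos).eventually_gt_atTop _
      filter_upwards [hev1] with α hα
      refine le_iInf fun i' => ?_
      refine le_sInf ?_
      rintro t ⟨n, rfl, hn1, hγn⟩
      rcases le_or_gt (N₀ + 1) n with h | h
      · exact_mod_cast Nat.cast_le (α := ℕ∞) |>.2 h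
      · exfalso
        have hnN : n ≤ N₀ := by omega
        have hn0 : (0:ℝ) < (n:ℝ) := by exact_mod_cast hn1
        have hγlower : Real.log (Cζ / α) / n ≤ gammaTh (Fintype.card X) M α n := by
          have hb1 : (0:ℝ) ≤ 1 / (n:ℝ) ^ (0.85:ℝ) := by positivity
          have hb2 : (0:ℝ) ≤ ((Fintype.card X : ℝ) * Real.log ((n:ℝ) + 1) +
              Real.log ((M:ℝ) - 1)) / (n:ℝ) := by
            apply div_nonneg _ (Nat.cast_nonneg n)
            have l1 : (0:ℝ) ≤ Real.log ((n:ℝ) + 1) := Real.log_nonneg (by linarith)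
            have l2 : (0:ℝ) ≤ Real.log ((M:ℝ) - 1) := by
              refine Real.log_nonneg ?_
              have : (2:ℝ) ≤ (M:ℝ) := by exact_mod_cast hM
              linarith
            exact add_nonneg (mul_nonneg (Nat.cast_nonneg _) l1) l2
          unfold gammaTh
          linarith
        have h2 : Lmax < Real.log (Cζ / α) / n := by
          rw [lt_div_iff₀ hn0]
          have h5 : Lmax * (n:ℝ) ≤ (N₀:ℝ) * Lmax := by
            rw [mul_comm]
            refine mul_le_mul_of_nonneg_right ?_ hLmax0
            exact_mod_cast hnN
          linarith
        have h3 : Zstat P d Δ i' n ω < gammaTh (Fintype.card X) M α n :=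
          lt_of_le_of_lt (hZub i' n) (lt_of_lt_of_le h2 hγlower)
        exact absurd hγn (not_le.2 h3)
    have hN : Tendsto (fun α : ℝ => (Tstar P d Δ α ω).toNat) (𝓝[>] (0:ℝ)) atTop := by
      rw [tendsto_atTop]
      intro b
      filter_upwards [hNbound b] with α hα
      obtain ⟨nf, _, hnf2⟩ := hfin α
      have hne : Tstar P d Δ α ω ≠ ⊤ := by
        intro hcon
        rw [hcon] at hnf2
        exact (ENat.coe_ne_top nf) (top_le_iff.1 hnf2)
      have h5 : (b : ℕ∞) ≤ ((Tstar P d Δ α ω).toNat : ℕ∞) := by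
        rw [ENat.coe_toNat hne]
        calc (b : ℕ∞) ≤ (b : ℕ∞) + 1 := le_self_add
          _ ≤ Tstar P d Δ α ω := hα
      exact_mod_cast h5
    have hN' : Tendsto (fun α : ℝ => (Tstar P d Δ α ω).toNat - 1) (𝓝[>] (0:ℝ)) atTop := by
      rw [tendsto_atTop]
      intro b
      filter_upwards [tendsto_atTop.1 hN (b + 1)] with α hα
      omega
    exact ⟨hF.comp hN, hF.comp hN'⟩
  exact ⟨main.mono fun ω h => h.1, main.mono fun ω h => h.2⟩

end

end AHT
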